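/- Let G be a locally compact second countable Hausdorff topological group acting continuously on a topological space M, and assume that for every nonempty compact subset K ⊆ M the setwise stabiliser G_K = {g ∈ G : g·K = K} is compact. Let 𝔐 be a nonempty G-set equipped with a G-equivariant assignment m ↦ K_m of nonempty compact subsets of M (coupling zones), i.e. K_{g·m} = g·K_m for all g ∈ G and m ∈ 𝔐. Let Σ be a nonempty Hausdorff topological space with a continuous transitive G-action, and suppose that Σ resolves 𝔐. Then the stabiliser subgroup G_s of every point s ∈ Σ is a compact subgroup of G; that is, the quantum reference frame with value space Σ is compactly stabilised. -/

import Mathlib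

open Pointwise

/-- Let `G` be a locally compact second countable Hausdorff topological group
acting continuously on a topological space `M` such that the setwise stabiliser of every
nonempty compact subset of `M` is compact.  Let `Mm` (the set `𝔐` of measurement schemes) be
a nonempty `G`-set with a `G`-equivariant assignment `Kz` of nonempty compact coupling zones
`Kz m ⊆ M`, and let `Sg` (the value space `Σ`) be a nonempty Hausdorff space with a
continuous transitive `G`-action which resolves `Mm`.  Then every point stabiliser
`stabilizer G s`, `s ∈ Sg`, is compact: the QRF is compactly stabilised. -/
theorem stmt3 {G : Type*} [Group G] [TopologicalSpace G] [IsTopologicalGroup G]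
    [LocallyCompactSpace G] [SecondCountableTopology G] [T2Space G]
    {M : Type*} [TopologicalSpace M] [MulAction G M] [ContinuousSMul G M]
    (hM : ∀ K : Set M, K.Nonempty → IsCompact K → IsCompact {g : G | g • K = K})
    {Mm : Type*} [MulAction G Mm] [Nonempty Mm]
    (Kz : Mm → Set M)
    (hKz : ∀ m : Mm, (Kz m).Nonempty ∧ IsCompact (Kz m))
    (hKzEquiv : ∀ (g : G) (m : Mm), Kz (g • m) = g • Kz m)
    {Sg : Type*} [TopologicalSpace Sg] [T2Space Sg] [MulAction G Sg] [ContinuousSMul G Sg]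
    [Nonempty Sg] [MulAction.IsPretransitive G Sg]
    (hresolve : ∀ m : Mm, ∃ s : Sg, ∃ m' ∈ MulAction.orbit G m,
        MulAction.stabilizer G s ≤ MulAction.stabilizer G m') :
    ∀ s : Sg, IsCompact (MulAction.stabilizer G s : Set G) := by

  -- First prove compactness for one particular point, then transport by transitivity.
  obtain ⟨m0⟩ := ‹Nonempty Mm›
  obtain ⟨s0, m', _, hle⟩ := hresolve m0
  have hstabK : (MulAction.stabilizer G m' : Set G) ⊆ {g : G | g • Kz m' = Kz m'} := by
    intro g hg
    have : Kz (g • m') = g • Kz m' := hKzEquiv g m'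
    simpa [MulAction.mem_stabilizer_iff.mp hg] using this.symm
  have hKcpt : IsCompact {g : G | g • Kz m' = Kz m'} :=
    hM (Kz m') (hKz m').1 (hKz m').2
  have hclosed : ∀ s : Sg, IsClosed (MulAction.stabilizer G s : Set G) := by
    intro s
    have : (MulAction.stabilizer G s : Set G) = (fun g : G => g • s) ⁻¹' {s} := by
      ext g; simp [MulAction.mem_stabilizer_iff]
    rw [this]
    exact (isClosed_singleton).preimage (continuous_id.smul continuous_const)
  have hcpt0 : IsCompact (MulAction.stabilizer G s0 : Set G) := by
    refine hKcpt.of_isClosed_subset (hclosed s0) ?_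
    exact fun g hg => hstabK (hle hg)
  intro s
  obtain ⟨g, hg⟩ := MulAction.exists_smul_eq G s0 s
  have hconj : (MulAction.stabilizer G s : Set G) =
      (fun x : G => g * x * g⁻¹) '' (MulAction.stabilizer G s0 : Set G) := by
    ext x
    constructor
    · intro hx
      refine ⟨g⁻¹ * x * g, ?_, by group⟩
      have : (g⁻¹ * x * g) • s0 = s0 := by
        rw [← hg] at hx
        have hx' : x • (g • s0) = g • s0 := hx
        rw [mul_smul, mul_smul, hx']
        simp
      exact this
    · rintro ⟨y, hy, rfl⟩
      have hy' : y • s0 = s0 := hy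
      show (g * y * g⁻¹) • s = s
      rw [← hg, mul_smul, mul_smul, inv_smul_smul, hy']
  rw [hconj]
  exact hcpt0.image (by continuity)
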